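/- Let x = (x₁,x₂,x₃) and y = (y₁,y₂,y₃) be vectors in ℤ³ such that there exists z ∈ ℤ³ with det[x y z] = 1. Assume y₁x₃ − x₁y₃ ≠ 0 and y₁x₂ − x₁y₂ ≠ 0. Let e₃ = (0,0,1), and define n¹ = x × y, n² = y × e₃, n³ = x × e₃, and suppose the cone Θ = {v ∈ ℝ³ : n¹·v > 0, n²·v > 0, n³·v < 0} is nonempty. Then there exists t = (t₁,t₂,t₃) ∈ Θ ∩ ℤ³ such that (a) there exists u ∈ ℤ³ with det[x t u] = 1, and (b) gcd(t₁,t₂) = 1 and gcd(t₁,t₃) = 1. -/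

import Mathlib

/-- Determinant of the 3×3 integer matrix with columns `a`, `b`, `c`. -/
def det3 (a b c : Fin 3 → ℤ) : ℤ := Matrix.det (Matrix.transpose (Matrix.of ![a, b, c]))

/-- Cross product in `ℤ³`. -/
def crossInt (a b : Fin 3 → ℤ) : Fin 3 → ℤ :=
  ![a 1 * b 2 - a 2 * b 1, a 2 * b 0 - a 0 * b 2, a 0 * b 1 - a 1 * b 0]

/-- Integer dot product in `ℤ³`. -/
def dotI (a b : Fin 3 → ℤ) : ℤ := a 0 * b 0 + a 1 * b 1 + a 2 * b 2

/-- Dot product of an integer vector with a real vector in `ℝ³`. -/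
def dotR (a : Fin 3 → ℤ) (v : Fin 3 → ℝ) : ℝ :=
  (a 0 : ℝ) * v 0 + (a 1 : ℝ) * v 1 + (a 2 : ℝ) * v 2

lemma det3_expand (x t u : Fin 3 → ℤ) : det3 x t u =
    u 0 * (x 1 * t 2 - x 2 * t 1) + u 1 * (x 2 * t 0 - x 0 * t 2) +
      u 2 * (x 0 * t 1 - x 1 * t 0) := by
  rw [det3, Matrix.det_transpose]
  simp [Matrix.det_fin_three]; ring

lemma det3_expand1 (x y z : Fin 3 → ℤ) : det3 x y z =
    x 0 * (y 1 * z 2 - y 2 * z 1) + x 1 * (y 2 * z 0 - y 0 * z 2) +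
      x 2 * (y 0 * z 1 - y 1 * z 0) := by
  rw [det3_expand]; ring

lemma keyk_aux (A B C D : ℤ) (hA : 0 < A) :
    ∃ k : ℤ, 0 < B + A * k ∧ (D ≠ 0 → C + D * k ≠ 0) := by
  set N : ℤ := |B| + |C| + 1 with hN
  have hNpos : 0 < N := by positivity
  have hB := neg_abs_le B
  have hCn := abs_nonneg C
  have hAN : N ≤ A * N := le_mul_of_one_le_left hNpos.le hA
  refine ⟨N, by linarith, ?_⟩
  intro hD h0
  have hD1 : 1 ≤ |D| := Int.one_le_abs hD
  have habs : |C| = |D| * N := by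
    have hC : C = -(D * N) := by linarith
    rw [hC, abs_neg, abs_mul, abs_of_nonneg hNpos.le]
  have : N ≤ |D| * N := le_mul_of_one_le_left hNpos.le hD1
  have := abs_nonneg B
  linarith

lemma keyk (A B C D : ℤ) (hA : A ≠ 0) :
    ∃ k : ℤ, 0 < B + A * k ∧ (D ≠ 0 → C + D * k ≠ 0) := by
  rcases hA.lt_or_gt with h | h
  · obtain ⟨k, hk1, hk2⟩ := keyk_aux (-A) B C (-D) (by linarith)
    refine ⟨-k, by linarith [hk1], ?_⟩
    intro hD
    have := hk2 (by simpa using hD)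
    simpa using this
  · exact keyk_aux A B C D h

theorem toric1 (x y : Fin 3 → ℤ)
    (hz : ∃ z : Fin 3 → ℤ, det3 x y z = 1)
    (h13 : y 0 * x 2 - x 0 * y 2 ≠ 0) (h12 : y 0 * x 1 - x 0 * y 1 ≠ 0)
    (e₃ : Fin 3 → ℤ) (he₃ : e₃ = ![0, 0, 1])
    (n₁ n₂ n₃ : Fin 3 → ℤ)
    (hn₁ : n₁ = crossInt x y) (hn₂ : n₂ = crossInt y e₃) (hn₃ : n₃ = crossInt x e₃)
    (hΘ : ∃ v : Fin 3 → ℝ, 0 < dotR n₁ v ∧ 0 < dotR n₂ v ∧ dotR n₃ v < 0) :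
    ∃ t : Fin 3 → ℤ,
      (0 < dotI n₁ t ∧ 0 < dotI n₂ t ∧ dotI n₃ t < 0) ∧
      (∃ u : Fin 3 → ℤ, det3 x t u = 1) ∧
      Int.gcd (t 0) (t 1) = 1 ∧ Int.gcd (t 0) (t 2) = 1 := by
  subst he₃ hn₁ hn₂ hn₃
  obtain ⟨z, hzdet⟩ := hz
  have hx01 : ¬(x 0 = 0 ∧ x 1 = 0) := by
    rintro ⟨h0, h1⟩; apply h12; rw [h0, h1]; ring
  have hDpos : 0 < Int.gcd (x 0) (x 1) := Int.gcd_pos_iff.mpr (not_and_or.mp hx01)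
  set D : ℤ := (Int.gcd (x 0) (x 1) : ℤ) with hDdef
  have hDpos' : (0 : ℤ) < D := by rw [hDdef]; exact_mod_cast hDpos
  have hDne : D ≠ 0 := hDpos'.ne'
  obtain ⟨a, ha⟩ : D ∣ x 0 := Int.gcd_dvd_left _ _
  obtain ⟨b, hb⟩ : D ∣ x 1 := Int.gcd_dvd_right _ _
  have hab : IsCoprime a b := by
    rw [Int.isCoprime_iff_gcd_eq_one]
    have hcop := Int.gcd_div_gcd_div_gcd hDpos
    have ha' : x 0 / D = a := by rw [ha]; exact Int.mul_ediv_cancel_left _ hDne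
    have hb' : x 1 / D = b := by rw [hb]; exact Int.mul_ediv_cancel_left _ hDne
    rwa [← hDdef, ha', hb'] at hcop
  obtain ⟨u, v, huv⟩ := hab
  have hE : y 1 * a - y 0 * b ≠ 0 := by
    intro h
    apply h12
    have hDE : D * (y 1 * a - y 0 * b) = y 1 * x 0 - y 0 * x 1 := by rw [ha, hb]; ring
    have : y 1 * x 0 - y 0 * x 1 = 0 := by rw [← hDE, h, mul_zero]
    linear_combination -this
  obtain ⟨k, hk1, hk2⟩ := keyk (y 1 * a - y 0 * b) (-(y 1 * v) - y 0 * u) (-v) a hE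
  set t0 : ℤ := -v + a * k with ht0
  set t1 : ℤ := u + b * k with ht1
  have heq : a * t1 - b * t0 = 1 := by rw [ht0, ht1]; linear_combination huv
  have ht0ne : t0 ≠ 0 := by
    by_cases ha0 : a = 0
    · intro h0
      rw [ha0, h0] at heq
      simp at heq
    · exact hk2 ha0
  have hF : 0 < y 1 * t0 - y 0 * t1 := by
    have hid : y 1 * t0 - y 0 * t1
        = -(y 1 * v) - y 0 * u + (y 1 * a - y 0 * b) * k := by rw [ht0, ht1]; ring
    linarith
  have hG : x 1 * t0 - x 0 * t1 = -D := by
    calc x 1 * t0 - x 0 * t1 = -(D * (a * t1 - b * t0)) := by rw [ha, hb]; ring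
    _ = -D := by rw [heq, mul_one]
  have hc2 : x 0 * y 1 - x 1 * y 0 ≠ 0 := fun h => h12 (by linear_combination -h)
  obtain ⟨m, hm1, -⟩ := keyk ((x 0 * y 1 - x 1 * y 0) * t0)
    ((x 1 * y 2 - x 2 * y 1) * t0 + (x 2 * y 0 - x 0 * y 2) * t1 + (x 0 * y 1 - x 1 * y 0))
    0 0 (mul_ne_zero hc2 ht0ne)
  set t2 : ℤ := 1 + m * t0 with ht2
  -- minors
  set m1 : ℤ := x 1 * t2 - x 2 * t1 with hm1d
  set m2 : ℤ := x 2 * t0 - x 0 * t2 with hm2d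
  set m3 : ℤ := x 0 * t1 - x 1 * t0 with hm3d
  have hm3D : m3 = D := by rw [hm3d]; linarith
  set g23 : ℕ := Int.gcd m2 m3 with hg23
  have hq01 : ∀ q : ℕ, Nat.Prime q → (q : ℤ) ∣ 1 → False := by
    intro q hq hd
    have : q ∣ 1 := by exact_mod_cast hd
    exact hq.one_lt.ne' (Nat.dvd_one.mp this)
  have hg : Int.gcd m1 (g23 : ℤ) = 1 := by
    by_contra hne
    obtain ⟨q, hq, hqdvd⟩ := Nat.exists_prime_and_dvd hne
    have hqZ : (q : ℤ) ∣ (Int.gcd m1 (g23 : ℤ) : ℤ) := Int.natCast_dvd_natCast.mpr hqdvd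
    have hq1 : (q : ℤ) ∣ m1 := hqZ.trans (Int.gcd_dvd_left _ _)
    have hqg : (q : ℤ) ∣ (g23 : ℤ) := hqZ.trans (Int.gcd_dvd_right _ _)
    have hq2 : (q : ℤ) ∣ m2 := hqg.trans (Int.gcd_dvd_left _ _)
    have hq3 : (q : ℤ) ∣ m3 := hqg.trans (Int.gcd_dvd_right _ _)
    have hqD : (q : ℤ) ∣ D := hm3D ▸ hq3
    have hqx0 : (q : ℤ) ∣ x 0 := hqD.trans ⟨a, ha⟩
    have hqx1 : (q : ℤ) ∣ x 1 := hqD.trans ⟨b, hb⟩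
    by_cases hqx2 : (q : ℤ) ∣ x 2
    · apply hq01 q hq
      rw [← hzdet, det3_expand1]
      exact dvd_add (dvd_add (hqx0.mul_right _) (hqx1.mul_right _)) (hqx2.mul_right _)
    · have h1 : (q : ℤ) ∣ x 2 * t1 := by
        have hrw : x 2 * t1 = x 1 * t2 - m1 := by rw [hm1d]; ring
        rw [hrw]; exact dvd_sub (hqx1.mul_right _) hq1
      have h2 : (q : ℤ) ∣ x 2 * t0 := by
        have hrw : x 2 * t0 = m2 + x 0 * t2 := by rw [hm2d]; ring
        rw [hrw]; exact dvd_add hq2 (hqx0.mul_right _)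
      have ht1d : (q : ℤ) ∣ t1 := (Int.Prime.dvd_mul' hq h1).resolve_left hqx2
      have ht0d : (q : ℤ) ∣ t0 := (Int.Prime.dvd_mul' hq h2).resolve_left hqx2
      apply hq01 q hq
      rw [← heq]
      exact dvd_sub (ht1d.mul_left a) (ht0d.mul_left b)
  have hb1 := Int.gcd_eq_gcd_ab m1 (g23 : ℤ)
  rw [hg] at hb1
  push_cast at hb1
  have hb2 := Int.gcd_eq_gcd_ab m2 m3
  rw [← hg23] at hb2
  refine ⟨![t0, t1, t2], ⟨?_, ?_, ?_⟩, ?_, ?_, ?_⟩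
  · have hd1 : dotI (crossInt x y) ![t0, t1, t2]
        = (x 1 * y 2 - x 2 * y 1) * t0 + (x 2 * y 0 - x 0 * y 2) * t1
          + (x 0 * y 1 - x 1 * y 0) * t2 := by
      simp [dotI, crossInt]; try ring
    rw [hd1]
    have hid : (x 1 * y 2 - x 2 * y 1) * t0 + (x 2 * y 0 - x 0 * y 2) * t1
        + (x 0 * y 1 - x 1 * y 0) * t2
        = ((x 1 * y 2 - x 2 * y 1) * t0 + (x 2 * y 0 - x 0 * y 2) * t1
          + (x 0 * y 1 - x 1 * y 0)) + (x 0 * y 1 - x 1 * y 0) * t0 * m := by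
      rw [ht2]; ring
    rw [hid]
    linarith [hm1]
  · have hd2 : dotI (crossInt y ![0, 0, 1]) ![t0, t1, t2] = y 1 * t0 - y 0 * t1 := by
      simp [dotI, crossInt]; try ring
    rw [hd2]; exact hF
  · have hd3 : dotI (crossInt x ![0, 0, 1]) ![t0, t1, t2] = x 1 * t0 - x 0 * t1 := by
      simp [dotI, crossInt]; try ring
    rw [hd3, hG]; linarith
  · refine ⟨![Int.gcdA m1 (g23 : ℤ), Int.gcdA m2 m3 * Int.gcdB m1 (g23 : ℤ),
      Int.gcdB m2 m3 * Int.gcdB m1 (g23 : ℤ)], ?_⟩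
    rw [det3_expand]
    show Int.gcdA m1 (g23 : ℤ) * (x 1 * t2 - x 2 * t1)
      + Int.gcdA m2 m3 * Int.gcdB m1 (g23 : ℤ) * (x 2 * t0 - x 0 * t2)
      + Int.gcdB m2 m3 * Int.gcdB m1 (g23 : ℤ) * (x 0 * t1 - x 1 * t0) = 1
    rw [← hm1d, ← hm2d, ← hm3d]
    linear_combination -hb1 - Int.gcdB m1 (g23 : ℤ) * hb2
  · show Int.gcd t0 t1 = 1
    exact Int.isCoprime_iff_gcd_eq_one.mp ⟨-b, a, by linear_combination heq⟩
  · show Int.gcd t0 t2 = 1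
    exact Int.isCoprime_iff_gcd_eq_one.mp ⟨-m, 1, by rw [ht2]; ring⟩
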